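/- For every integer n ≥ 1, the function Φ(ρ) := φ₀'(ρ)/φ₀(ρ) satisfies Φ(ρ) < 1 for every ρ ∈ ℝ, and Φ(ρ) → 1 as ρ → ∞. -/

import Mathlib

open Real Filter

noncomputable def b (n : ℕ) (j : ℕ) : ℝ :=
  ∏ ℓ ∈ Finset.Icc 1 j, 1 / (2 * (ℓ : ℝ) * ((n : ℝ) + 2 * ((ℓ : ℝ) - 1)))

noncomputable def phi0 (n : ℕ) (ρ : ℝ) : ℝ := ∑' j : ℕ, b n j * ρ ^ (2 * j)

lemma b_zero (n : ℕ) : b n 0 = 1 := by simp [b]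

lemma b_succ (n : ℕ) (j : ℕ) :
    b n (j + 1) = b n j * (1 / (2 * ((j : ℝ) + 1) * ((n : ℝ) + 2 * j))) := by
  unfold b
  rw [Finset.prod_Icc_succ_top (Nat.le_add_left 1 j)]
  push_cast
  norm_num

lemma b_pos (n : ℕ) (hn : 1 ≤ n) (j : ℕ) : 0 < b n j := by
  unfold b
  apply Finset.prod_pos
  intro ℓ hℓ
  simp only [Finset.mem_Icc] at hℓ
  have h1 : (1 : ℝ) ≤ (ℓ : ℝ) := by exact_mod_cast hℓ.1
  have h2 : (1 : ℝ) ≤ (n : ℝ) := by exact_mod_cast hn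
  have h3 : (0:ℝ) < (n:ℝ) + 2*((ℓ:ℝ)-1) := by nlinarith
  positivity

lemma b_le (n : ℕ) (hn : 1 ≤ n) (j : ℕ) : b n j ≤ 1 / ((Nat.factorial j : ℕ) : ℝ) := by
  have : b n j ≤ ∏ ℓ ∈ Finset.Icc 1 j, 1 / (ℓ : ℝ) := by
    apply Finset.prod_le_prod
    · intro ℓ hℓ
      simp only [Finset.mem_Icc] at hℓ
      have h1 : (1 : ℝ) ≤ (ℓ : ℝ) := by exact_mod_cast hℓ.1
      have h2 : (1 : ℝ) ≤ (n : ℝ) := by exact_mod_cast hn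
      have h3 : (0:ℝ) < (n:ℝ) + 2*((ℓ:ℝ)-1) := by nlinarith
      positivity
    · intro ℓ hℓ
      simp only [Finset.mem_Icc] at hℓ
      have h1 : (1 : ℝ) ≤ (ℓ : ℝ) := by exact_mod_cast hℓ.1
      have h2 : (1 : ℝ) ≤ (n : ℝ) := by exact_mod_cast hn
      rw [div_le_div_iff₀ (by nlinarith) (by linarith)]
      nlinarith
  refine this.trans ?_
  have hp : ∏ ℓ ∈ Finset.Icc 1 j, (1:ℝ) / ℓ = 1 / ∏ ℓ ∈ Finset.Icc 1 j, (ℓ:ℝ) := by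
    simp [one_div, ← Finset.prod_inv_distrib]
  rw [hp]
  have hq : ∏ ℓ ∈ Finset.Icc 1 j, (ℓ : ℝ) = ((Nat.factorial j : ℕ) : ℝ) := by
    rw [← Nat.cast_prod]
    norm_cast
    rw [← Finset.Ico_add_one_right_eq_Icc]
    exact Finset.prod_Ico_id_eq_factorial j
  rw [hq]

lemma sum_master (y : ℝ) (hy : 0 ≤ y) :
    Summable (fun j : ℕ => ((j : ℝ) ^ 2 + 1) * y ^ j / (Nat.factorial j : ℝ)) := by
  apply summable_of_ratio_norm_eventually_le (r := 1/2) (by norm_num)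
  have h1 : ∀ᶠ (j : ℕ) in atTop, (4 * y + 8 : ℝ) ≤ j :=
    tendsto_natCast_atTop_atTop.eventually_ge_atTop _
  filter_upwards [h1] with j hj
  have hj0 : (0:ℝ) ≤ j := by positivity
  have hfac : (0:ℝ) < ((Nat.factorial j : ℕ) : ℝ) := by positivity
  rw [Real.norm_eq_abs, Real.norm_eq_abs, abs_of_nonneg (by positivity),
    abs_of_nonneg (by positivity)]
  have key : (((j:ℝ)+1)^2+1) * y ≤ 1/2 * ((j:ℝ)^2+1) * ((j:ℝ)+1) := by
    nlinarith [sq_nonneg ((j:ℝ)), sq_nonneg ((j:ℝ)-2)]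
  rw [Nat.factorial_succ, Nat.cast_mul, pow_succ]
  push_cast
  rw [div_le_iff₀ (by positivity)]
  have cancel : ((j:ℝ)^2+1) * y^j / (j.factorial:ℝ) * (j.factorial:ℝ) = ((j:ℝ)^2+1) * y^j :=
    div_mul_cancel₀ _ hfac.ne'
  have e1 : y ^ (j+1) = y ^ j * y := pow_succ y j
  have e2 : 1/2 * (((j:ℝ)^2+1) * y^j / (j.factorial:ℝ)) * (((j:ℝ)+1) * (j.factorial:ℝ))
      = 1/2 * (((j:ℝ)^2+1) * y^j) * ((j:ℝ)+1) := by
    field_simp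
  nlinarith [mul_le_mul_of_nonneg_right key (pow_nonneg hy j), e1, e2]

noncomputable def D1 (n : ℕ) (ρ : ℝ) : ℝ := ∑' j : ℕ, 2 * (j:ℝ) * b n j * ρ ^ (2*j-1)

noncomputable def D2 (n : ℕ) (ρ : ℝ) : ℝ :=
  ∑' j : ℕ, 2 * (j:ℝ) * ((2*j-1 : ℕ) : ℝ) * b n j * ρ ^ (2*j-2)

lemma summable_dom {f : ℕ → ℝ} (C y : ℝ) (hy : 0 ≤ y)
    (h : ∀ j, |f j| ≤ C * (((j:ℝ)^2+1) * y^j / (j.factorial : ℝ))) : Summable f :=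
  Summable.of_norm_bounded ((sum_master y hy).mul_left C) h

lemma pow_bound {x R : ℝ} (hR1 : 1 ≤ R) (hxR : |x| ≤ R) {e j : ℕ} (he : e ≤ 2*j) :
    |x ^ e| ≤ (R^2) ^ j := by
  rw [abs_pow, ← pow_mul]
  calc |x|^e ≤ R^e := pow_le_pow_left₀ (abs_nonneg x) hxR e
    _ ≤ R^(2*j) := pow_le_pow_right₀ (by linarith) he

lemma sq_div_fac_nonneg (R : ℝ) (j : ℕ) : (0:ℝ) ≤ (R^2)^j / (j.factorial : ℝ) := by positivity

lemma summable_phi_term (n : ℕ) (hn : 1 ≤ n) {x R : ℝ} (hR1 : 1 ≤ R) (hxR : |x| ≤ R) :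
    Summable (fun j : ℕ => b n j * x ^ (2*j)) := by
  apply summable_dom 1 (R^2) (by positivity)
  intro j
  have h1 := b_pos n hn j
  have h2 := b_le n hn j
  have h3 := pow_bound hR1 hxR (le_refl (2*j))
  have h4 := sq_div_fac_nonneg R j
  have hfac : (0:ℝ) < (j.factorial : ℝ) := by positivity
  rw [abs_mul, abs_of_pos h1]
  have h5 : b n j * |x^(2*j)| ≤ (1/(j.factorial:ℝ)) * (R^2)^j :=
    mul_le_mul h2 h3 (abs_nonneg _) (by positivity)
  calc b n j * |x^(2*j)| ≤ (1/(j.factorial:ℝ)) * (R^2)^j := h5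
    _ = (R^2)^j / (j.factorial:ℝ) := by ring
    _ ≤ 1 * (((j:ℝ)^2+1) * (R^2)^j / (j.factorial:ℝ)) := by
        rw [one_mul, mul_div_assoc]
        exact le_mul_of_one_le_left h4 (by nlinarith [sq_nonneg ((j:ℝ))])

lemma summable_D1_term (n : ℕ) (hn : 1 ≤ n) {x R : ℝ} (hR1 : 1 ≤ R) (hxR : |x| ≤ R) :
    Summable (fun j : ℕ => 2 * (j:ℝ) * b n j * x ^ (2*j-1)) := by
  apply summable_dom 2 (R^2) (by positivity)
  intro j
  have h1 := b_pos n hn j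
  have h2 := b_le n hn j
  have h3 := pow_bound hR1 hxR (Nat.sub_le (2*j) 1)
  have h4 := sq_div_fac_nonneg R j
  have hfac : (0:ℝ) < (j.factorial : ℝ) := by positivity
  have hj0 : (0:ℝ) ≤ (j:ℝ) := by positivity
  rw [abs_mul, abs_mul, abs_of_pos h1, abs_of_nonneg (by positivity : (0:ℝ) ≤ 2*(j:ℝ))]
  have h5 : b n j * |x^(2*j-1)| ≤ (1/(j.factorial:ℝ)) * (R^2)^j :=
    mul_le_mul h2 h3 (abs_nonneg _) (by positivity)
  have h6 : 2*(j:ℝ) * (b n j * |x^(2*j-1)|) ≤ 2*(j:ℝ) * ((1/(j.factorial:ℝ)) * (R^2)^j) :=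
    mul_le_mul_of_nonneg_left h5 (by positivity)
  calc 2*(j:ℝ) * b n j * |x^(2*j-1)| = 2*(j:ℝ) * (b n j * |x^(2*j-1)|) := by ring
    _ ≤ 2*(j:ℝ) * ((1/(j.factorial:ℝ)) * (R^2)^j) := h6
    _ = 2 * ((j:ℝ) * ((R^2)^j / (j.factorial:ℝ))) := by ring
    _ ≤ 2 * (((j:ℝ)^2+1) * (R^2)^j / (j.factorial:ℝ)) := by
        rw [mul_div_assoc]
        exact mul_le_mul_of_nonneg_left
          (mul_le_mul_of_nonneg_right (by nlinarith [sq_nonneg ((j:ℝ)-1)]) h4) (by norm_num)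

lemma summable_D2_term (n : ℕ) (hn : 1 ≤ n) {x R : ℝ} (hR1 : 1 ≤ R) (hxR : |x| ≤ R) :
    Summable (fun j : ℕ => 2 * (j:ℝ) * ((2*j-1 : ℕ) : ℝ) * b n j * x ^ (2*j-2)) := by
  apply summable_dom 4 (R^2) (by positivity)
  intro j
  have h1 := b_pos n hn j
  have h2 := b_le n hn j
  have h3 := pow_bound hR1 hxR (Nat.sub_le (2*j) 2)
  have h4 := sq_div_fac_nonneg R j
  have hfac : (0:ℝ) < (j.factorial : ℝ) := by positivity
  have hc : ((2*j-1 : ℕ) : ℝ) ≤ 2*(j:ℝ) := by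
    have := Nat.sub_le (2*j) 1
    calc ((2*j-1 : ℕ) : ℝ) ≤ ((2*j : ℕ) : ℝ) := by exact_mod_cast this
      _ = 2*(j:ℝ) := by push_cast; ring
  have hc0 : (0:ℝ) ≤ ((2*j-1 : ℕ) : ℝ) := by positivity
  rw [abs_mul, abs_mul, abs_mul, abs_of_pos h1,
    abs_of_nonneg (by positivity : (0:ℝ) ≤ 2*(j:ℝ)), abs_of_nonneg hc0]
  have h5 : b n j * |x^(2*j-2)| ≤ (1/(j.factorial:ℝ)) * (R^2)^j :=
    mul_le_mul h2 h3 (abs_nonneg _) (by positivity)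
  have h6 : 2*(j:ℝ) * ((2*j-1:ℕ):ℝ) * (b n j * |x^(2*j-2)|)
      ≤ (2*(j:ℝ)) * (2*(j:ℝ)) * ((1/(j.factorial:ℝ)) * (R^2)^j) := by
    apply mul_le_mul (by nlinarith) h5 (by positivity) (by positivity)
  calc 2*(j:ℝ) * ((2*j-1:ℕ):ℝ) * b n j * |x^(2*j-2)|
      = 2*(j:ℝ) * ((2*j-1:ℕ):ℝ) * (b n j * |x^(2*j-2)|) := by ring
    _ ≤ (2*(j:ℝ)) * (2*(j:ℝ)) * ((1/(j.factorial:ℝ)) * (R^2)^j) := h6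
    _ = 4 * ((j:ℝ)^2 * ((R^2)^j / (j.factorial:ℝ))) := by ring
    _ ≤ 4 * (((j:ℝ)^2+1) * (R^2)^j / (j.factorial:ℝ)) := by
        rw [mul_div_assoc]
        exact mul_le_mul_of_nonneg_left
          (mul_le_mul_of_nonneg_right (by nlinarith) h4) (by norm_num)

lemma hasDerivAt_phi0 (n : ℕ) (hn : 1 ≤ n) (x : ℝ) : HasDerivAt (phi0 n) (D1 n x) x := by
  set R := |x| + 1 with hR
  have hR1 : (1:ℝ) ≤ R := by have := abs_nonneg x; linarith
  have hR0 : (0:ℝ) < R := by linarith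
  have key : HasDerivAt (fun z : ℝ => ∑' j : ℕ, b n j * z ^ (2*j))
      (∑' j : ℕ, 2 * (j:ℝ) * b n j * x ^ (2*j-1)) x := by
    apply hasDerivAt_tsum_of_isPreconnected
      (u := fun j : ℕ => 2 * (((j:ℝ)^2+1) * (R^2)^j / (j.factorial:ℝ)))
      (t := Metric.ball (0:ℝ) R) (y₀ := (0:ℝ))
      (g' := fun j y => 2 * (j:ℝ) * b n j * y ^ (2*j-1))
    · exact (sum_master (R^2) (by positivity)).mul_left 2
    · exact Metric.isOpen_ball
    · exact (convex_ball (0:ℝ) R).isPreconnected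
    · intro j y _
      have h := (hasDerivAt_pow (2*j) y).const_mul (b n j)
      refine h.congr_deriv ?_
      push_cast
      ring
    · intro j y hy
      have hyR : |y| ≤ R := by
        rw [Metric.mem_ball, Real.dist_eq, sub_zero] at hy
        linarith
      -- same bound as in summable_D1_term
      have h1 := b_pos n hn j
      have h2 := b_le n hn j
      have h3 := pow_bound hR1 hyR (Nat.sub_le (2*j) 1)
      have h4 := sq_div_fac_nonneg R j
      have hfac : (0:ℝ) < (j.factorial : ℝ) := by positivity
      rw [Real.norm_eq_abs, abs_mul, abs_mul, abs_of_pos h1,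
        abs_of_nonneg (by positivity : (0:ℝ) ≤ 2*(j:ℝ))]
      have h5 : b n j * |y^(2*j-1)| ≤ (1/(j.factorial:ℝ)) * (R^2)^j :=
        mul_le_mul h2 h3 (abs_nonneg _) (by positivity)
      calc 2*(j:ℝ) * b n j * |y^(2*j-1)| = 2*(j:ℝ) * (b n j * |y^(2*j-1)|) := by ring
        _ ≤ 2*(j:ℝ) * ((1/(j.factorial:ℝ)) * (R^2)^j) :=
            mul_le_mul_of_nonneg_left h5 (by positivity)
        _ = 2 * ((j:ℝ) * ((R^2)^j / (j.factorial:ℝ))) := by ring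
        _ ≤ 2 * (((j:ℝ)^2+1) * (R^2)^j / (j.factorial:ℝ)) := by
            rw [mul_div_assoc]
            exact mul_le_mul_of_nonneg_left
              (mul_le_mul_of_nonneg_right (by nlinarith [sq_nonneg ((j:ℝ)-1)]) h4) (by norm_num)
    · exact Metric.mem_ball_self hR0
    · apply summable_of_ne_finset_zero (s := {0})
      intro j hj
      simp only [Finset.mem_singleton] at hj
      have : 2*j ≠ 0 := by omega
      simp [zero_pow this]
    · rw [Metric.mem_ball, Real.dist_eq, sub_zero]
      linarith [le_abs_self x, neg_abs_le x]
  exact key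

lemma hasDerivAt_D1 (n : ℕ) (hn : 1 ≤ n) (x : ℝ) : HasDerivAt (D1 n) (D2 n x) x := by
  set R := |x| + 1 with hR
  have hR1 : (1:ℝ) ≤ R := by have := abs_nonneg x; linarith
  have hR0 : (0:ℝ) < R := by linarith
  apply hasDerivAt_tsum_of_isPreconnected
    (u := fun j : ℕ => 4 * (((j:ℝ)^2+1) * (R^2)^j / (j.factorial:ℝ)))
    (t := Metric.ball (0:ℝ) R) (y₀ := (0:ℝ))
    (g' := fun j y => 2 * (j:ℝ) * ((2*j-1 : ℕ):ℝ) * b n j * y ^ (2*j-2))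
  · exact (sum_master (R^2) (by positivity)).mul_left 4
  · exact Metric.isOpen_ball
  · exact (convex_ball (0:ℝ) R).isPreconnected
  · intro j y _
    have h := (hasDerivAt_pow (2*j-1) y).const_mul (2 * (j:ℝ) * b n j)
    have he : 2*j-1-1 = 2*j-2 := by omega
    rw [he] at h
    refine h.congr_deriv ?_
    ring
  · intro j y hy
    have hyR : |y| ≤ R := by
      rw [Metric.mem_ball, Real.dist_eq, sub_zero] at hy
      linarith
    have h1 := b_pos n hn j
    have h2 := b_le n hn j
    have h3 := pow_bound hR1 hyR (Nat.sub_le (2*j) 2)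
    have h4 := sq_div_fac_nonneg R j
    have hfac : (0:ℝ) < (j.factorial : ℝ) := by positivity
    have hc : ((2*j-1 : ℕ) : ℝ) ≤ 2*(j:ℝ) := by
      have := Nat.sub_le (2*j) 1
      calc ((2*j-1 : ℕ) : ℝ) ≤ ((2*j : ℕ) : ℝ) := by exact_mod_cast this
        _ = 2*(j:ℝ) := by push_cast; ring
    have hc0 : (0:ℝ) ≤ ((2*j-1 : ℕ) : ℝ) := by positivity
    rw [Real.norm_eq_abs, abs_mul, abs_mul, abs_mul, abs_of_pos h1,
      abs_of_nonneg (by positivity : (0:ℝ) ≤ 2*(j:ℝ)), abs_of_nonneg hc0]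
    have h5 : b n j * |y^(2*j-2)| ≤ (1/(j.factorial:ℝ)) * (R^2)^j :=
      mul_le_mul h2 h3 (abs_nonneg _) (by positivity)
    calc 2*(j:ℝ) * ((2*j-1:ℕ):ℝ) * b n j * |y^(2*j-2)|
        = 2*(j:ℝ) * ((2*j-1:ℕ):ℝ) * (b n j * |y^(2*j-2)|) := by ring
      _ ≤ (2*(j:ℝ)) * (2*(j:ℝ)) * ((1/(j.factorial:ℝ)) * (R^2)^j) := by
          apply mul_le_mul (by nlinarith [Nat.cast_nonneg (α := ℝ) j]) h5 (by positivity) (by positivity)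
      _ = 4 * ((j:ℝ)^2 * ((R^2)^j / (j.factorial:ℝ))) := by ring
      _ ≤ 4 * (((j:ℝ)^2+1) * (R^2)^j / (j.factorial:ℝ)) := by
          rw [mul_div_assoc]
          exact mul_le_mul_of_nonneg_left
            (mul_le_mul_of_nonneg_right (by nlinarith) h4) (by norm_num)
  · exact Metric.mem_ball_self hR0
  · apply summable_of_ne_finset_zero (s := {0})
    intro j hj
    simp only [Finset.mem_singleton] at hj
    have : 2*j-1 ≠ 0 := by omega
    simp [zero_pow this]
  · rw [Metric.mem_ball, Real.dist_eq, sub_zero]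
    linarith [le_abs_self x, neg_abs_le x]

lemma summable_phi' (n : ℕ) (hn : 1 ≤ n) (x : ℝ) :
    Summable (fun j : ℕ => b n j * x ^ (2*j)) :=
  summable_phi_term n hn (R := |x|+1) (by linarith [abs_nonneg x]) (by linarith)

lemma summable_D1' (n : ℕ) (hn : 1 ≤ n) (x : ℝ) :
    Summable (fun j : ℕ => 2 * (j:ℝ) * b n j * x ^ (2*j-1)) :=
  summable_D1_term n hn (R := |x|+1) (by linarith [abs_nonneg x]) (by linarith)

lemma summable_D2' (n : ℕ) (hn : 1 ≤ n) (x : ℝ) :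
    Summable (fun j : ℕ => 2 * (j:ℝ) * ((2*j-1 : ℕ):ℝ) * b n j * x ^ (2*j-2)) :=
  summable_D2_term n hn (R := |x|+1) (by linarith [abs_nonneg x]) (by linarith)

lemma phi0_ge_one (n : ℕ) (hn : 1 ≤ n) (ρ : ℝ) : 1 ≤ phi0 n ρ := by
  have hs := summable_phi' n hn ρ
  have h0 : b n 0 * ρ ^ (2*0) = 1 := by simp [b_zero]
  calc (1:ℝ) = b n 0 * ρ ^ (2*0) := h0.symm
    _ ≤ ∑' j, b n j * ρ ^ (2*j) := by
        apply hs.le_tsum 0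
        intro j _
        have := b_pos n hn j
        have : (0:ℝ) ≤ ρ ^ (2*j) := Even.pow_nonneg (even_two_mul j) ρ
        positivity
    _ = phi0 n ρ := rfl

lemma phi0_pos (n : ℕ) (hn : 1 ≤ n) (ρ : ℝ) : 0 < phi0 n ρ :=
  lt_of_lt_of_le one_pos (phi0_ge_one n hn ρ)

lemma D1_nonneg (n : ℕ) (hn : 1 ≤ n) {ρ : ℝ} (hρ : 0 ≤ ρ) : 0 ≤ D1 n ρ := by
  apply tsum_nonneg
  intro j
  have := (b_pos n hn j).le
  positivity

lemma D1_nonpos (n : ℕ) (hn : 1 ≤ n) {ρ : ℝ} (hρ : ρ ≤ 0) : D1 n ρ ≤ 0 := by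
  apply tsum_nonpos
  intro j
  rcases Nat.eq_zero_or_pos j with h | h
  · simp [h]
  · have hodd : Odd (2*j-1) := by
      refine ⟨j-1, by omega⟩
    have h1 : ρ ^ (2*j-1) ≤ 0 := hodd.pow_nonpos hρ
    have h2 := (b_pos n hn j).le
    have h3 : (0:ℝ) ≤ 2*(j:ℝ) := by positivity
    have := mul_nonpos_of_nonneg_of_nonpos (mul_nonneg h3 h2) h1
    linarith [this]

lemma phi0_zero (n : ℕ) : phi0 n 0 = 1 := by
  unfold phi0
  rw [tsum_eq_single 0]
  · simp [b_zero]
  · intro j hj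
    have : 2*j ≠ 0 := by omega
    simp [zero_pow this]

lemma D1_zero (n : ℕ) : D1 n 0 = 0 := by
  unfold D1
  have : ∀ j : ℕ, 2 * (j:ℝ) * b n j * (0:ℝ) ^ (2*j-1) = 0 := by
    intro j
    rcases Nat.eq_zero_or_pos j with h | h
    · simp [h]
    · have : 2*j-1 ≠ 0 := by omega
      simp [zero_pow this]
  rw [tsum_congr this]
  exact tsum_zero

lemma ode (n : ℕ) (hn : 1 ≤ n) (ρ : ℝ) :
    ρ * D2 n ρ + ((n:ℝ) - 1) * D1 n ρ = phi0 n ρ * ρ := by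
  have S1 := summable_D1' n hn ρ
  have S2 := summable_D2' n hn ρ
  set c : ℝ := (n:ℝ) - 1 with hc
  set F : ℕ → ℝ := fun j =>
    ρ * (2 * (j:ℝ) * ((2*j-1 : ℕ):ℝ) * b n j * ρ ^ (2*j-2))
      + c * (2 * (j:ℝ) * b n j * ρ ^ (2*j-1)) with hF
  have SF : Summable F := (S2.mul_left ρ).add (S1.mul_left c)
  have h1 : ρ * D2 n ρ + c * D1 n ρ = ∑' j, F j := by
    unfold D1 D2
    rw [← tsum_mul_left, ← tsum_mul_left, ← Summable.tsum_add (S2.mul_left ρ) (S1.mul_left c)]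
  rw [h1, Summable.tsum_eq_zero_add SF]
  have hF0 : F 0 = 0 := by simp [hF]
  have hFs : ∀ j : ℕ, F (j+1) = b n j * ρ ^ (2*j) * ρ := by
    intro j
    have e1 : 2*(j+1)-2 = 2*j := by omega
    have e2 : 2*(j+1)-1 = 2*j+1 := by omega
    have hnz1 : ((n:ℝ) + 2*(j:ℝ)) ≠ 0 := by
      have : (1:ℝ) ≤ (n:ℝ) := by exact_mod_cast hn
      positivity
    have hnz2 : ((j:ℝ) + 1) ≠ 0 := by positivity
    simp only [hF, b_succ n j, e1, e2]
    push_cast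
    rw [pow_succ]
    field_simp
    ring
  rw [hF0, tsum_congr hFs, tsum_mul_right, ← phi0]
  · ring

lemma D1_lt_phi0 (n : ℕ) (hn : 1 ≤ n) (ρ : ℝ) : D1 n ρ < phi0 n ρ := by
  rcases le_or_gt ρ 0 with hρ | hρ
  · calc D1 n ρ ≤ 0 := D1_nonpos n hn hρ
      _ < 1 := one_pos
      _ ≤ phi0 n ρ := phi0_ge_one n hn ρ
  · set g : ℝ → ℝ := fun t => Real.exp t * (phi0 n t - D1 n t) with hg
    have hderiv : ∀ t : ℝ, HasDerivAt g (Real.exp t * (phi0 n t - D2 n t)) t := by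
      intro t
      have h := (Real.hasDerivAt_exp t).mul ((hasDerivAt_phi0 n hn t).sub (hasDerivAt_D1 n hn t))
      refine h.congr_deriv ?_
      simp only [Pi.sub_apply]
      ring
    have hmono : MonotoneOn g (Set.Ici (0:ℝ)) := by
      apply monotoneOn_of_deriv_nonneg (convex_Ici 0)
      · exact (Continuous.continuousOn (by
          have : Differentiable ℝ g := fun t => (hderiv t).differentiableAt
          exact this.continuous))
      · intro t ht
        exact ((hderiv t).differentiableAt).differentiableWithinAt
      · intro t ht
        rw [interior_Ici] at ht
        rw [(hderiv t).deriv]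
        have ht0 : 0 < t := ht
        have hode := ode n hn t
        have hD1 : 0 ≤ D1 n t := D1_nonneg n hn ht0.le
        have hn1 : (0:ℝ) ≤ (n:ℝ) - 1 := by
          have : (1:ℝ) ≤ (n:ℝ) := by exact_mod_cast hn
          linarith
        have key : 0 ≤ t * (phi0 n t - D2 n t) := by nlinarith
        have : 0 ≤ phi0 n t - D2 n t := nonneg_of_mul_nonneg_right key ht0
        positivity
    have h01 : g 0 ≤ g ρ := hmono (Set.self_mem_Ici) (Set.mem_Ici.mpr hρ.le) hρ.le
    have hg0 : g 0 = 1 := by simp [hg, phi0_zero, D1_zero]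
    rw [hg0] at h01
    have h01' : (1:ℝ) ≤ Real.exp ρ * (phi0 n ρ - D1 n ρ) := h01
    have hexp := Real.exp_pos ρ
    nlinarith [h01', hexp]

lemma ratio_lower (n : ℕ) (hn : 1 ≤ n) {R : ℝ} (hR : 0 < R) {ρ : ℝ} (hρ : R ≤ ρ) :
    1 - D1 n ρ / phi0 n ρ ≤ Real.exp (R - ρ) + ((n:ℝ)-1)/R := by
  have hn1 : (0:ℝ) ≤ (n:ℝ) - 1 := by
    have : (1:ℝ) ≤ (n:ℝ) := by exact_mod_cast hn
    linarith
  set Φ : ℝ → ℝ := fun t => D1 n t / phi0 n t with hΦ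
  have hΦderiv : ∀ t : ℝ, HasDerivAt Φ
      ((D2 n t * phi0 n t - D1 n t * D1 n t) / (phi0 n t)^2) t := by
    intro t
    exact (hasDerivAt_D1 n hn t).div (hasDerivAt_phi0 n hn t) (phi0_pos n hn t).ne'
  set w : ℝ → ℝ := fun t => Real.exp t * (1 - Φ t) - ((n:ℝ)-1)/R * Real.exp t with hw
  have hwderiv : ∀ t : ℝ, HasDerivAt w
      (Real.exp t * (1 - Φ t) + Real.exp t * (-(((D2 n t * phi0 n t - D1 n t * D1 n t) / (phi0 n t)^2)))
        - ((n:ℝ)-1)/R * Real.exp t) t := by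
    intro t
    have h1 := (Real.hasDerivAt_exp t).mul ((hasDerivAt_const t (1:ℝ)).sub (hΦderiv t))
    have h2 := (Real.hasDerivAt_exp t).const_mul (((n:ℝ)-1)/R)
    have := h1.sub h2
    refine this.congr_deriv ?_
    simp only [Pi.sub_apply]
    ring
  have hanti : AntitoneOn w (Set.Ici R) := by
    apply antitoneOn_of_deriv_nonpos (convex_Ici R)
    · exact Continuous.continuousOn (Differentiable.continuous fun t => (hwderiv t).differentiableAt)
    · intro t _
      exact ((hwderiv t).differentiableAt).differentiableWithinAt
    · intro t ht
      rw [interior_Ici] at ht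
      have htR : R < t := ht
      have ht0 : 0 < t := lt_trans hR htR
      rw [(hwderiv t).deriv]
      have hphi := phi0_pos n hn t
      have hD1 : 0 ≤ D1 n t := D1_nonneg n hn ht0.le
      have hΦ0 : 0 ≤ Φ t := div_nonneg hD1 hphi.le
      have hΦ1 : Φ t < 1 := (div_lt_one hphi).mpr (D1_lt_phi0 n hn t)
      have hode := ode n hn t
      have hQ : (D2 n t * phi0 n t - D1 n t * D1 n t) / (phi0 n t)^2
          = D2 n t / phi0 n t - (Φ t)^2 := by
        rw [hΦ]
        field_simp
      have hDiv : D2 n t / phi0 n t = 1 - ((n:ℝ)-1) * (Φ t / t) := by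
        rw [div_eq_iff (phi0_pos n hn t).ne', hΦ]
        field_simp
        linear_combination hode
      have hdd : Φ t / t ≤ 1 / R := div_le_div₀ zero_le_one hΦ1.le hR htR.le
      have hmm : ((n:ℝ)-1) * (Φ t / t) ≤ ((n:ℝ)-1) * (1/R) :=
        mul_le_mul_of_nonneg_left hdd hn1
      have hkey : (1 - Φ t) - (D2 n t * phi0 n t - D1 n t * D1 n t) / (phi0 n t)^2
          ≤ ((n:ℝ)-1)/R := by
        rw [hQ, hDiv]
        have h3 : (Φ t)^2 - Φ t ≤ 0 := by nlinarith
        have : ((n:ℝ)-1) * (1/R) = ((n:ℝ)-1)/R := by ring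
        linarith
      have hexp := Real.exp_pos t
      calc Real.exp t * (1 - Φ t) + Real.exp t * (-((D2 n t * phi0 n t - D1 n t * D1 n t) / (phi0 n t)^2))
            - ((n:ℝ)-1)/R * Real.exp t
          = Real.exp t * ((1 - Φ t) - (D2 n t * phi0 n t - D1 n t * D1 n t) / (phi0 n t)^2
              - ((n:ℝ)-1)/R) := by ring
        _ ≤ Real.exp t * 0 := by
            apply mul_le_mul_of_nonneg_left _ hexp.le
            linarith
        _ = 0 := by ring
  have hwle : w ρ ≤ w R := hanti (Set.self_mem_Ici) (Set.mem_Ici.mpr hρ) hρ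
  have hΦR0 : 0 ≤ Φ R := div_nonneg (D1_nonneg n hn hR.le) (phi0_pos n hn R).le
  have hexpρ := Real.exp_pos ρ
  have hexpR := Real.exp_pos R
  have hwR : w R ≤ Real.exp R := by
    have : ((n:ℝ)-1)/R * Real.exp R ≥ 0 := by positivity
    have h1 : Real.exp R * (1 - Φ R) ≤ Real.exp R := by nlinarith
    simp only [hw]
    linarith
  have h2 : Real.exp ρ * (1 - Φ ρ) - ((n:ℝ)-1)/R * Real.exp ρ ≤ Real.exp R :=
    le_trans hwle hwR
  have hmain : Real.exp ρ * (1 - Φ ρ) ≤ Real.exp R + ((n:ℝ)-1)/R * Real.exp ρ := by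
    linarith
  rw [Real.exp_sub]
  have hfinal : 1 - Φ ρ ≤ (Real.exp R + ((n:ℝ)-1)/R * Real.exp ρ) / Real.exp ρ := by
    rw [le_div_iff₀ hexpρ]
    nlinarith [hmain]
  calc 1 - D1 n ρ / phi0 n ρ = 1 - Φ ρ := rfl
    _ ≤ (Real.exp R + ((n:ℝ)-1)/R * Real.exp ρ) / Real.exp ρ := hfinal
    _ = Real.exp R / Real.exp ρ + ((n:ℝ)-1)/R := by
        rw [add_div]
        congr 1
        exact mul_div_cancel_right₀ _ hexpρ.ne'

theorem stmt7 (n : ℕ) (hn : 1 ≤ n) :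
    (∀ ρ : ℝ, deriv (phi0 n) ρ / phi0 n ρ < 1) ∧
    Tendsto (fun ρ : ℝ => deriv (phi0 n) ρ / phi0 n ρ) atTop (nhds 1) := by
  have hd : ∀ ρ : ℝ, deriv (phi0 n) ρ = D1 n ρ := fun ρ => (hasDerivAt_phi0 n hn ρ).deriv
  constructor
  · intro ρ
    rw [hd]
    exact (div_lt_one (phi0_pos n hn ρ)).mpr (D1_lt_phi0 n hn ρ)
  · have hfun : (fun ρ : ℝ => deriv (phi0 n) ρ / phi0 n ρ) = fun ρ => D1 n ρ / phi0 n ρ := by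
      funext ρ
      rw [hd]
    rw [hfun, Metric.tendsto_atTop]
    intro ε hε
    set R : ℝ := 2*(n:ℝ)/ε + 1 with hRdef
    have hnR : (0:ℝ) ≤ 2*(n:ℝ)/ε := by positivity
    have hRpos : (0:ℝ) < R := by
      rw [hRdef]
      linarith
    have hn1 : (1:ℝ) ≤ (n:ℝ) := by exact_mod_cast hn
    have hR2 : ((n:ℝ)-1)/R < ε/2 := by
      rw [div_lt_iff₀ hRpos]
      have hεR : ε/2 * R = (n:ℝ) + ε/2 := by
        rw [hRdef]
        field_simp
      linarith
    refine ⟨max R (R - Real.log (ε/2) + 1), fun ρ hρ => ?_⟩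
    have hρR : R ≤ ρ := le_trans (le_max_left _ _) hρ
    have hbound := ratio_lower n hn hRpos hρR
    have hΦlt : D1 n ρ / phi0 n ρ < 1 := (div_lt_one (phi0_pos n hn ρ)).mpr (D1_lt_phi0 n hn ρ)
    rw [Real.dist_eq, abs_of_nonpos (by linarith)]
    have hexp1 : (1:ℝ) < Real.exp 1 := by
      have := Real.add_one_lt_exp (by norm_num : (1:ℝ) ≠ 0)
      linarith
    have hexp : Real.exp (R - ρ) < ε/2 := by
      have h1 : R - ρ ≤ Real.log (ε/2) - 1 := by
        have := le_trans (le_max_right _ _) hρ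
        linarith
      calc Real.exp (R-ρ) ≤ Real.exp (Real.log (ε/2) - 1) := Real.exp_le_exp.mpr h1
        _ = (ε/2) / Real.exp 1 := by
            rw [Real.exp_sub, Real.exp_log (by positivity : (0:ℝ) < ε/2)]
        _ < ε/2 := div_lt_self (by positivity) hexp1
    linarith [hbound]
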